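/- For every irrational x ∈ (0,1), the series Σ_{j≥0} (−1)^{j−1} β_{j−1}(x) F(α_j(x)) converges absolutely, and there is an absolute constant C such that |Σ_{j>0} (−1)^{j−1} β_{j−1}(x) F(α_j(x))| ≤ C x for all x ∈ (0,1), assuming F is bounded on (0,1). -/

import Mathlib

/-- The Gauss map `α(x) = {1/x}`. -/
noncomputable def gaussMap (x : ℝ) : ℝ := Int.fract x⁻¹

/-- Iterates of the Gauss map. -/
noncomputable def gaussIter (k : ℕ) (x : ℝ) : ℝ := gaussMap^[k] x

/-- `β_{j-1}(x) = α_0(x) ⋯ α_{j-1}(x)`, so `betaProd 0 x = β_{-1}(x) = 1`. -/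
noncomputable def betaProd (j : ℕ) (x : ℝ) : ℝ :=
  ∏ i ∈ Finset.range j, gaussIter i x

lemma gaussMap_mem {y : ℝ} (hirr : Irrational y) :
    gaussMap y ∈ Set.Ioo (0:ℝ) 1 ∧ Irrational (gaussMap y) := by
  have hinv : Irrational y⁻¹ := hirr.inv
  have hfr : Irrational (Int.fract y⁻¹) := by
    rw [Int.fract]; exact hinv.sub_intCast _
  refine ⟨⟨?_, Int.fract_lt_one _⟩, hfr⟩
  rcases lt_or_eq_of_le (Int.fract_nonneg y⁻¹) with h | h
  · exact h
  · exact absurd (h ▸ hfr) (by simp [Irrational])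

lemma pair_le {y : ℝ} (hy : y ∈ Set.Ioo (0:ℝ) 1) : y * gaussMap y ≤ 2⁻¹ := by
  obtain ⟨h0, h1⟩ := hy
  rcases le_or_gt y 2⁻¹ with h | h
  · have hg1 : gaussMap y < 1 := Int.fract_lt_one _
    have hg0 : 0 ≤ gaussMap y := Int.fract_nonneg _
    nlinarith
  · have h1y : 1 < y⁻¹ := (one_lt_inv₀ h0).mpr h1
    have h2y : y⁻¹ < 2 := by
      rw [inv_lt_iff_one_lt_mul₀ h0]; nlinarith
    have hfl : ⌊y⁻¹⌋ = 1 := by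
      rw [Int.floor_eq_iff]
      constructor <;> push_cast <;> linarith
    have hg : gaussMap y = y⁻¹ - 1 := by
      rw [gaussMap, Int.fract, hfl]; norm_num
    rw [hg]
    have : y * (y⁻¹ - 1) = 1 - y := by field_simp
    rw [this]; linarith

lemma gaussIter_mem {x : ℝ} (hx : x ∈ Set.Ioo (0:ℝ) 1) (hirr : Irrational x) (k : ℕ) :
    gaussIter k x ∈ Set.Ioo (0:ℝ) 1 ∧ Irrational (gaussIter k x) := by
  induction k with
  | zero => exact ⟨hx, hirr⟩
  | succ n ih =>
    have : gaussIter (n+1) x = gaussMap (gaussIter n x) := by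
      simp [gaussIter, Function.iterate_succ_apply']
    rw [this]
    exact gaussMap_mem ih.2

lemma betaProd_succ (j : ℕ) (x : ℝ) :
    betaProd (j+1) x = betaProd j x * gaussIter j x := by
  simp [betaProd, Finset.prod_range_succ]

lemma betaProd_bound {x : ℝ} (hx : x ∈ Set.Ioo (0:ℝ) 1) (hirr : Irrational x) :
    ∀ n : ℕ, betaProd (n+1) x ≤ x * (2⁻¹ : ℝ) ^ (n/2) := by
  have hmem := gaussIter_mem hx hirr
  intro n
  induction n using Nat.twoStepInduction with
  | zero => simp [betaProd, gaussIter]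
  | one =>
    have h1 := (hmem 1).1
    simp only [betaProd, Finset.prod_range_succ, Finset.range_zero, Finset.prod_empty,
      one_mul, Nat.reduceDiv, pow_zero, mul_one]
    have h0 : gaussIter 0 x = x := by simp [gaussIter]
    rw [h0]
    nlinarith [hx.1, h1.1, h1.2]
  | more n ih _ =>
    have key : gaussIter (n+1) x * gaussIter (n+2) x ≤ 2⁻¹ := by
      have : gaussIter (n+2) x = gaussMap (gaussIter (n+1) x) := by
        simp [gaussIter, Function.iterate_succ_apply']
      rw [this]
      exact pair_le (hmem (n+1)).1
    have hb : 0 ≤ betaProd (n+1) x := Finset.prod_nonneg fun i _ => le_of_lt (hmem i).1.1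
    have hx2 : (n+2)/2 = n/2 + 1 := by omega
    rw [betaProd_succ, betaProd_succ, mul_assoc, hx2, pow_succ]
    calc betaProd (n+1) x * (gaussIter (n+1) x * gaussIter (n+2) x)
        ≤ betaProd (n+1) x * 2⁻¹ := by
          apply mul_le_mul_of_nonneg_left key hb
    _ ≤ x * (2⁻¹:ℝ)^(n/2) * 2⁻¹ := by nlinarith
    _ = x * ((2⁻¹:ℝ)^(n/2) * 2⁻¹) := by ring

lemma half_pow_le (n : ℕ) :
    ((2:ℝ)⁻¹)^(n/2) ≤ 2 * (Real.sqrt 2⁻¹)^(n+1) := by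
  set r := Real.sqrt (2⁻¹:ℝ) with hrdef
  have hr2 : r^2 = 2⁻¹ := Real.sq_sqrt (by norm_num)
  have hr0 : 0 < r := Real.sqrt_pos.mpr (by norm_num)
  have h2r : 1 ≤ 2 * r := by nlinarith
  rcases Nat.even_or_odd n with ⟨m, hm⟩ | ⟨m, hm⟩
  · subst hm
    have hdiv : (m+m)/2 = m := by omega
    rw [hdiv]
    have hl : ((2:ℝ)⁻¹)^m = r^(m+m) := by
      rw [← hr2, ← pow_mul, two_mul]
    rw [hl, pow_succ]
    nlinarith [pow_pos hr0 (m+m)]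
  · subst hm
    have hdiv : (2*m+1)/2 = m := by omega
    rw [hdiv]
    have hr : r^(2*m+1+1) = (2⁻¹:ℝ)^(m+1) := by
      have : 2*m+1+1 = 2*(m+1) := by ring
      rw [this, pow_mul, hr2]
    rw [hr, pow_succ]
    nlinarith [pow_pos (show (0:ℝ) < 2⁻¹ by norm_num) m]

/-- If `F` is bounded on `(0,1)`, then for every irrational `x ∈ (0,1)` the series
`Σ_{j≥0} (-1)^{j-1} β_{j-1}(x) F(α_j(x))` converges absolutely, and there is a constant
`C` such that `|Σ_{j>0} (-1)^{j-1} β_{j-1}(x) F(α_j(x))| ≤ C x`. -/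
theorem series_betaProd_F_bound (F : ℝ → ℝ)
    (hF : ∃ M : ℝ, ∀ x ∈ Set.Ioo (0:ℝ) 1, |F x| ≤ M) :
    ∃ C : ℝ, ∀ x ∈ Set.Ioo (0:ℝ) 1, Irrational x →
      Summable (fun j : ℕ => |(-1 : ℝ) ^ (j - 1) * betaProd j x * F (gaussIter j x)|) ∧
      |∑' n : ℕ, (-1 : ℝ) ^ n * betaProd (n + 1) x * F (gaussIter (n + 1) x)| ≤ C * x := by
  obtain ⟨M, hM⟩ := hF
  set M' : ℝ := max M 0 with hM'def
  have hM'0 : 0 ≤ M' := le_max_right _ _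
  have hM' : ∀ y ∈ Set.Ioo (0:ℝ) 1, |F y| ≤ M' := fun y hy => (hM y hy).trans (le_max_left _ _)
  set r : ℝ := Real.sqrt 2⁻¹ with hrdef
  have hr2 : r^2 = 2⁻¹ := Real.sq_sqrt (by norm_num)
  have hr0 : 0 < r := Real.sqrt_pos.mpr (by norm_num)
  have hr1 : r < 1 := by nlinarith
  refine ⟨2 * M' * (1 - r)⁻¹, fun x hx hirr => ?_⟩
  have hmem := gaussIter_mem hx hirr
  have hbeta := betaProd_bound hx hirr
  have hbnn : ∀ j, 0 ≤ betaProd j x :=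
    fun j => Finset.prod_nonneg fun i _ => le_of_lt (hmem i).1.1
  have habs : ∀ j : ℕ, |(-1 : ℝ) ^ (j - 1) * betaProd j x * F (gaussIter j x)|
      ≤ betaProd j x * M' := by
    intro j
    rw [abs_mul, abs_mul, abs_pow, abs_neg, abs_one, one_pow, one_mul,
      abs_of_nonneg (hbnn j)]
    exact mul_le_mul_of_nonneg_left (hM' _ (hmem j).1) (hbnn j)
  have hbx : ∀ n : ℕ, betaProd (n+1) x ≤ x * (2 * r^(n+1)) := by
    intro n
    calc betaProd (n+1) x ≤ x * (2⁻¹:ℝ)^(n/2) := hbeta n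
    _ ≤ x * (2 * r^(n+1)) :=
        mul_le_mul_of_nonneg_left (half_pow_le n) (le_of_lt hx.1)
  -- uniform bound for summability
  have hbound : ∀ j : ℕ, |(-1 : ℝ) ^ (j - 1) * betaProd j x * F (gaussIter j x)|
      ≤ 2 * M' * r ^ j := by
    intro j
    refine (habs j).trans ?_
    cases j with
    | zero =>
      simp only [betaProd, Finset.range_zero, Finset.prod_empty, one_mul, pow_zero, mul_one]
      nlinarith
    | succ n =>
      have h1 : betaProd (n+1) x ≤ 2 * r^(n+1) := by
        have := hbx n
        nlinarith [pow_pos hr0 (n+1), hx.1, hx.2]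
      calc betaProd (n+1) x * M' ≤ (2 * r^(n+1)) * M' :=
          mul_le_mul_of_nonneg_right h1 hM'0
      _ = 2 * M' * r^(n+1) := by ring
  have hgeom : Summable (fun j : ℕ => 2 * M' * r ^ j) :=
    (summable_geometric_of_lt_one (le_of_lt hr0) hr1).mul_left _
  have hsum : Summable (fun j : ℕ => |(-1 : ℝ) ^ (j - 1) * betaProd j x * F (gaussIter j x)|) :=
    Summable.of_nonneg_of_le (fun j => abs_nonneg _) hbound hgeom
  refine ⟨hsum, ?_⟩
  -- tail bound
  have hgabs : ∀ n : ℕ, |(-1 : ℝ) ^ n * betaProd (n + 1) x * F (gaussIter (n + 1) x)|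
      ≤ 2 * M' * x * r ^ n := by
    intro n
    have h0 : |(-1 : ℝ) ^ n * betaProd (n + 1) x * F (gaussIter (n + 1) x)|
        ≤ betaProd (n+1) x * M' := by
      rw [abs_mul, abs_mul, abs_pow, abs_neg, abs_one, one_pow, one_mul,
        abs_of_nonneg (hbnn (n+1))]
      exact mul_le_mul_of_nonneg_left (hM' _ (hmem (n+1)).1) (hbnn (n+1))
    refine h0.trans ?_
    have h3 : r^(n+1) ≤ r^n := pow_le_pow_of_le_one (le_of_lt hr0) (le_of_lt hr1) (by omega)
    calc betaProd (n+1) x * M' ≤ x * (2 * r^(n+1)) * M' :=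
        mul_le_mul_of_nonneg_right (hbx n) hM'0
    _ ≤ x * (2 * r^n) * M' := by
        nlinarith [mul_nonneg (mul_nonneg (le_of_lt hx.1) hM'0) (sub_nonneg.mpr h3)]
    _ = 2 * M' * x * r^n := by ring
  have hgeomx : Summable (fun n : ℕ => 2 * M' * x * r ^ n) :=
    (summable_geometric_of_lt_one (le_of_lt hr0) hr1).mul_left _
  have hsumg : Summable (fun n : ℕ =>
      |(-1 : ℝ) ^ n * betaProd (n + 1) x * F (gaussIter (n + 1) x)|) :=
    Summable.of_nonneg_of_le (fun n => abs_nonneg _) hgabs hgeomx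
  have habs_tsum : |∑' n : ℕ, (-1 : ℝ) ^ n * betaProd (n + 1) x * F (gaussIter (n + 1) x)|
      ≤ ∑' n : ℕ, |(-1 : ℝ) ^ n * betaProd (n + 1) x * F (gaussIter (n + 1) x)| := by
    have := norm_tsum_le_tsum_norm
      (f := fun n : ℕ => (-1 : ℝ) ^ n * betaProd (n + 1) x * F (gaussIter (n + 1) x))
      (by simpa only [Real.norm_eq_abs] using hsumg)
    simpa only [Real.norm_eq_abs] using this
  have htsum_le : ∑' n : ℕ, |(-1 : ℝ) ^ n * betaProd (n + 1) x * F (gaussIter (n + 1) x)|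
      ≤ ∑' n : ℕ, 2 * M' * x * r ^ n :=
    Summable.tsum_le_tsum hgabs hsumg hgeomx
  have hgeom_val : ∑' n : ℕ, 2 * M' * x * r ^ n = 2 * M' * x * (1 - r)⁻¹ := by
    rw [tsum_mul_left, tsum_geometric_of_lt_one (le_of_lt hr0) hr1]
  calc |∑' n : ℕ, (-1 : ℝ) ^ n * betaProd (n + 1) x * F (gaussIter (n + 1) x)|
      ≤ ∑' n : ℕ, |(-1 : ℝ) ^ n * betaProd (n + 1) x * F (gaussIter (n + 1) x)| := habs_tsum
  _ ≤ 2 * M' * x * (1 - r)⁻¹ := by rw [← hgeom_val]; exact htsum_le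
  _ = 2 * M' * (1 - r)⁻¹ * x := by ring
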